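/- A 2m × 2m quantum covariance matrix V is pure if and only if the complex matrix V + iΩ has rank m. -/

import Mathlib

open Matrix ComplexOrder

/-- The standard symplectic form on `m` modes, in the `x|p` block representation. -/
noncomputable def Omg (m : ℕ) : Matrix (Fin m ⊕ Fin m) (Fin m ⊕ Fin m) ℝ :=
  fromBlocks 0 1 (-1) 0

lemma aux_nonneg {n : Type*} [Fintype n] {M : Matrix n n ℂ} (hM : M.PosSemidef)
    {v : n → ℂ} (hv : v ≠ 0) {t : ℝ} (ht : M *ᵥ v = t • v) : 0 ≤ t := by
  have h0 : 0 ≤ (star v ⬝ᵥ (M *ᵥ v)).re := hM.re_dotProduct_nonneg v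
  have hc : 0 < (star v ⬝ᵥ v).re := by
    have h1 : (star v ⬝ᵥ v).re = ∑ j, Complex.normSq (v j) := by
      simp [dotProduct, Complex.normSq_apply, Complex.mul_re]
    rw [h1]
    obtain ⟨j, hj⟩ := Function.ne_iff.mp hv
    exact Finset.sum_pos' (fun i _ => Complex.normSq_nonneg _)
      ⟨j, Finset.mem_univ j, Complex.normSq_pos.mpr hj⟩
  rw [ht, dotProduct_smul] at h0
  have h2 : ((t : ℝ) • (star v ⬝ᵥ v)).re = t * (star v ⬝ᵥ v).re := by
    simp [Complex.real_smul]
  rw [h2] at h0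
  nlinarith

open scoped MatrixOrder in
lemma exists_psd_sqrt {n : Type*} [Fintype n] [DecidableEq n] {M : Matrix n n ℂ}
    (hM : M.PosSemidef) : ∃ R : Matrix n n ℂ, R.PosSemidef ∧ R * R = M :=
  ⟨CFC.sqrt M, (CFC.sqrt_nonneg M).posSemidef, CFC.sqrt_mul_sqrt_self M hM.nonneg⟩

set_option maxHeartbeats 1000000 in
/-- A `2m × 2m` quantum covariance matrix `V` (real symmetric with `V ≥ iΩ`) is pure
(`det V = 1`) if and only if the complex matrix `V + iΩ` has rank `m`. -/
theorem pure_iff_rank {m : ℕ} (V : Matrix (Fin m ⊕ Fin m) (Fin m ⊕ Fin m) ℝ)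
    (hsymm : V.IsSymm)
    (hQCM : ((V.map Complex.ofReal) - Complex.I • (Omg m).map Complex.ofReal).PosSemidef) :
    V.det = 1 ↔ ((V.map Complex.ofReal) + Complex.I • (Omg m).map Complex.ofReal).rank = m := by
  classical
  set Oc : Matrix (Fin m ⊕ Fin m) (Fin m ⊕ Fin m) ℂ := (Omg m).map Complex.ofReal with hOcdef
  set Vc : Matrix (Fin m ⊕ Fin m) (Fin m ⊕ Fin m) ℂ := V.map Complex.ofReal with hVcdef
  set A : Matrix (Fin m ⊕ Fin m) (Fin m ⊕ Fin m) ℂ := Vc + Complex.I • Oc with hAdef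
  set B : Matrix (Fin m ⊕ Fin m) (Fin m ⊕ Fin m) ℂ := Vc - Complex.I • Oc with hBdef
  -- block facts
  have hOc : Oc = fromBlocks 0 1 (-1) 0 := by
    ext i j
    rcases i <;> rcases j <;>
      simp [hOcdef, Omg, fromBlocks, Matrix.map_apply, Matrix.one_apply,
        apply_ite Complex.ofReal]
  have hOcsq : Oc * Oc = -1 := by
    rw [hOc, fromBlocks_multiply, ← fromBlocks_one, fromBlocks_neg]; simp
  have hOcT : Ocᵀ = -Oc := by
    rw [hOc, fromBlocks_transpose, fromBlocks_neg]; simp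
  have hOcH : Ocᴴ = -Oc := by
    rw [hOc, fromBlocks_conjTranspose, fromBlocks_neg]; simp
  have hcard : Fintype.card (Fin m ⊕ Fin m) = m + m := by simp
  -- A = Bᵀ, PSD of A
  have hVcT : Vcᵀ = Vc := by
    rw [hVcdef, ← Matrix.transpose_map, hsymm.eq]
  have hABT : A = Bᵀ := by
    rw [hAdef, hBdef, transpose_sub, transpose_smul, hVcT, hOcT, smul_neg, sub_neg_eq_add]
  have hApsd : A.PosSemidef := hABT ▸ hQCM.transpose
  have hBpsd : B.PosSemidef := hQCM
  -- Vc is PD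
  have hVcpsd : Vc.PosSemidef := by
    have h2 : A + B = Vc + Vc := by
      rw [hAdef, hBdef]; abel
    refine PosSemidef.of_dotProduct_mulVec_nonneg ?_ fun x => ?_
    · ext i j
      simp only [conjTranspose_apply, hVcdef, Matrix.map_apply, Complex.star_def,
        Complex.conj_ofReal, Complex.ofReal_inj]
      exact (hsymm.apply i j)
    · have hA2 := hApsd.dotProduct_mulVec_nonneg x
      have hB2 := hBpsd.dotProduct_mulVec_nonneg x
      have hsum : star x ⬝ᵥ A *ᵥ x + star x ⬝ᵥ B *ᵥ x
          = star x ⬝ᵥ Vc *ᵥ x + star x ⬝ᵥ Vc *ᵥ x := by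
        rw [← dotProduct_add, ← add_mulVec, h2, add_mulVec, dotProduct_add]
      rw [Complex.le_def] at hA2 hB2 ⊢
      have h4 := congrArg Complex.re hsum
      have h5 := congrArg Complex.im hsum
      simp only [Complex.add_re, Complex.add_im, Complex.zero_re, Complex.zero_im] at *
      constructor <;> linarith
  -- Vc is positive definite
  have hVcpd : Vc.PosDef := by
    refine PosDef.of_dotProduct_mulVec_pos hVcpsd.1 fun x hx => ?_
    rcases lt_or_eq_of_le (hVcpsd.dotProduct_mulVec_nonneg x) with h | h
    · exact h
    · exfalso
      have hVx : Vc *ᵥ x = 0 := (hVcpsd.dotProduct_mulVec_zero_iff x).mp h.symm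
      have hsum0 : star x ⬝ᵥ A *ᵥ x + star x ⬝ᵥ B *ᵥ x = 0 := by
        rw [← dotProduct_add, ← add_mulVec,
          show A + B = Vc + Vc from by rw [hAdef, hBdef]; abel, add_mulVec, hVx]
        simp
      have hA0 : star x ⬝ᵥ A *ᵥ x = 0 := by
        have hb := hBpsd.dotProduct_mulVec_nonneg x
        have ha := hApsd.dotProduct_mulVec_nonneg x
        have heq : star x ⬝ᵥ A *ᵥ x = -(star x ⬝ᵥ B *ᵥ x) := by linear_combination hsum0
        refine le_antisymm ?_ ha
        rw [heq]
        exact neg_nonpos.mpr hb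
      have hB0 : star x ⬝ᵥ B *ᵥ x = 0 := by linear_combination hsum0 - hA0
      have hAx : A *ᵥ x = 0 := (hApsd.dotProduct_mulVec_zero_iff x).mp hA0
      have hBx : B *ᵥ x = 0 := (hBpsd.dotProduct_mulVec_zero_iff x).mp hB0
      have hOx : Oc *ᵥ x = 0 := by
        have hd : A - B = (2 * Complex.I) • Oc := by
          rw [hAdef, hBdef,
            show Vc + Complex.I • Oc - (Vc - Complex.I • Oc)
              = Complex.I • Oc + Complex.I • Oc from by abel, ← add_smul]
          ring_nf
        have h0 : (A - B) *ᵥ x = 0 := by rw [sub_mulVec, hAx, hBx, sub_zero]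
        rw [hd, smul_mulVec, smul_eq_zero] at h0
        rcases h0 with h | h
        · exact absurd h (by simp [Complex.I_ne_zero])
        · exact h
      apply hx
      have hneg : Oc *ᵥ (Oc *ᵥ x) = -x := by
        rw [mulVec_mulVec, hOcsq, neg_mulVec, one_mulVec]
      rw [hOx, mulVec_zero] at hneg
      simpa using hneg.symm
  -- square root
  obtain ⟨R, hRpsd, hRsq⟩ := exists_psd_sqrt hVcpsd
  have hRH : R.IsHermitian := hRpsd.1
  have hdVpos : 0 < Vc.det := hVcpd.det_pos
  have hdR : IsUnit R.det := by
    refine isUnit_iff_ne_zero.mpr fun h => ?_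
    have hrr : R.det * R.det = Vc.det := by rw [← det_mul, hRsq]
    rw [h, mul_zero] at hrr
    exact hdVpos.ne' hrr.symm
  set Ri := R⁻¹ with hRidef
  have hRRi : R * Ri = 1 := mul_nonsing_inv R hdR
  have hRiR : Ri * R = 1 := nonsing_inv_mul R hdR
  have hRiH : Ri.IsHermitian := hRH.inv
  set S := Complex.I • (Ri * Oc * Ri) with hSdef
  have hSH : S.IsHermitian := by
    rw [Matrix.IsHermitian, hSdef, conjTranspose_smul, conjTranspose_mul, conjTranspose_mul,
      hOcH, hRiH.eq]
    simp [Matrix.mul_neg, Matrix.neg_mul, mul_assoc]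
  have hAkey : A = R * ((1 + S) * R) := by
    have e1 : (1 + S) * R = R + Complex.I • (Ri * Oc) := by
      rw [add_mul, one_mul, hSdef, smul_mul_assoc, mul_assoc, mul_assoc, hRiR, mul_one]
    rw [e1, mul_add, hRsq, mul_smul_comm, ← mul_assoc, hRRi, one_mul, hAdef]
  have hBkey : B = R * ((1 - S) * R) := by
    have e1 : (1 - S) * R = R - Complex.I • (Ri * Oc) := by
      rw [sub_mul, one_mul, hSdef, smul_mul_assoc, mul_assoc, mul_assoc, hRiR, mul_one]
    rw [e1, mul_sub, hRsq, mul_smul_comm, ← mul_assoc, hRRi, one_mul, hBdef]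
  -- 1 ± S are PSD
  have hP1 : ((1 : Matrix (Fin m ⊕ Fin m) (Fin m ⊕ Fin m) ℂ) + S).PosSemidef := by
    have h := hApsd.mul_mul_conjTranspose_same Ri
    rw [hRiH.eq] at h
    have e : Ri * A * Ri = 1 + S := by
      rw [hAkey, ← mul_assoc Ri R, hRiR, one_mul, mul_assoc, hRRi, mul_one]
    rwa [e] at h
  have hP2 : ((1 : Matrix (Fin m ⊕ Fin m) (Fin m ⊕ Fin m) ℂ) - S).PosSemidef := by
    have h := hBpsd.mul_mul_conjTranspose_same Ri
    rw [hRiH.eq] at h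
    have e : Ri * B * Ri = 1 - S := by
      rw [hBkey, ← mul_assoc Ri R, hRiR, one_mul, mul_assoc, hRRi, mul_one]
    rwa [e] at h
  -- ranks
  have hrankA1 : A.rank = (1 + S).rank := by
    rw [hAkey, rank_mul_eq_right_of_isUnit_det R _ hdR, rank_mul_eq_left_of_isUnit_det R _ hdR]
  have hrankB1 : B.rank = (1 - S).rank := by
    rw [hBkey, rank_mul_eq_right_of_isUnit_det R _ hdR, rank_mul_eq_left_of_isUnit_det R _ hdR]
  have hrankAB : A.rank = B.rank := by rw [hABT, rank_transpose]
  -- spectral data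
  set μ := hSH.eigenvalues with hμdef
  set U : Matrix (Fin m ⊕ Fin m) (Fin m ⊕ Fin m) ℂ := (hSH.eigenvectorUnitary : Matrix (Fin m ⊕ Fin m) (Fin m ⊕ Fin m) ℂ) with hUdef
  have hU1 : U * star U = 1 := mem_unitaryGroup_iff.mp hSH.eigenvectorUnitary.2
  have hU2 : star U * U = 1 := mem_unitaryGroup_iff'.mp hSH.eigenvectorUnitary.2
  have hUdetu : IsUnit U.det := isUnit_det_of_right_inverse hU1
  have hUsdetu : IsUnit (star U).det := isUnit_det_of_right_inverse hU2
  have hSpec : S = U * diagonal (fun i => (μ i : ℂ)) * star U := hSH.spectral_theorem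
  have hplus : (1 : Matrix (Fin m ⊕ Fin m) (Fin m ⊕ Fin m) ℂ) + S
      = U * diagonal (fun i => 1 + (μ i : ℂ)) * star U := by
    have h1 : (1 : Matrix (Fin m ⊕ Fin m) (Fin m ⊕ Fin m) ℂ) = U * 1 * star U := by
      rw [mul_one, hU1]
    calc (1 : Matrix (Fin m ⊕ Fin m) (Fin m ⊕ Fin m) ℂ) + S
        = U * 1 * star U + U * diagonal (fun i => (μ i : ℂ)) * star U := by rw [← h1, ← hSpec]
      _ = U * (1 + diagonal (fun i => (μ i : ℂ))) * star U := by rw [mul_add, add_mul]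
      _ = _ := by rw [← diagonal_one, diagonal_add]
  have hminus : (1 : Matrix (Fin m ⊕ Fin m) (Fin m ⊕ Fin m) ℂ) - S
      = U * diagonal (fun i => 1 - (μ i : ℂ)) * star U := by
    have h1 : (1 : Matrix (Fin m ⊕ Fin m) (Fin m ⊕ Fin m) ℂ) = U * 1 * star U := by
      rw [mul_one, hU1]
    calc (1 : Matrix (Fin m ⊕ Fin m) (Fin m ⊕ Fin m) ℂ) - S
        = U * 1 * star U - U * diagonal (fun i => (μ i : ℂ)) * star U := by rw [← h1, ← hSpec]
      _ = U * (1 - diagonal (fun i => (μ i : ℂ))) * star U := by rw [mul_sub, sub_mul]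
      _ = _ := by rw [← diagonal_one, diagonal_sub]
  have hrankdiag1 : (1 + S).rank = Fintype.card {i // μ i ≠ -1} := by
    rw [hplus, rank_mul_eq_left_of_isUnit_det (star U) _ hUsdetu,
      rank_mul_eq_right_of_isUnit_det U _ hUdetu, rank_diagonal]
    apply Fintype.card_congr
    apply Equiv.subtypeEquivRight
    intro i
    constructor
    · intro h h'
      apply h
      rw [h']
      norm_num
    · intro h h'
      apply h
      have h'' : ((μ i : ℝ) : ℂ) = ((-1 : ℝ) : ℂ) := by push_cast; linear_combination h'
      exact_mod_cast h''
  have hrankdiag2 : (1 - S).rank = Fintype.card {i // μ i ≠ 1} := by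
    rw [hminus, rank_mul_eq_left_of_isUnit_det (star U) _ hUsdetu,
      rank_mul_eq_right_of_isUnit_det U _ hUdetu, rank_diagonal]
    apply Fintype.card_congr
    apply Equiv.subtypeEquivRight
    intro i
    constructor
    · intro h h'
      apply h
      rw [h']
      norm_num
    · intro h h'
      apply h
      have h'' : ((μ i : ℝ) : ℂ) = ((1 : ℝ) : ℂ) := by push_cast; linear_combination -h'
      exact_mod_cast h''
  -- eigenvalue bounds
  have hbound : ∀ i, -1 ≤ μ i ∧ μ i ≤ 1 := by
    intro i
    have hvne : (⇑(hSH.eigenvectorBasis i) : (Fin m ⊕ Fin m) → ℂ) ≠ 0 := by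
      intro h
      apply hSH.eigenvectorBasis.orthonormal.ne_zero i
      ext j
      exact congrFun h j
    have hSv : S *ᵥ ⇑(hSH.eigenvectorBasis i) = μ i • ⇑(hSH.eigenvectorBasis i) :=
      hSH.mulVec_eigenvectorBasis i
    constructor
    · have h1 : ((1 : Matrix (Fin m ⊕ Fin m) (Fin m ⊕ Fin m) ℂ) + S) *ᵥ ⇑(hSH.eigenvectorBasis i)
          = (1 + μ i) • ⇑(hSH.eigenvectorBasis i) := by
        rw [add_mulVec, one_mulVec, hSv, add_smul, one_smul]
      have := aux_nonneg hP1 hvne h1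
      linarith
    · have h1 : ((1 : Matrix (Fin m ⊕ Fin m) (Fin m ⊕ Fin m) ℂ) - S) *ᵥ ⇑(hSH.eigenvectorBasis i)
          = (1 - μ i) • ⇑(hSH.eigenvectorBasis i) := by
        rw [sub_mulVec, one_mulVec, hSv, sub_smul, one_smul]
      have := aux_nonneg hP2 hvne h1
      linarith
  -- determinant identities
  have hdetS : S.det = ∏ i, (μ i : ℂ) := hSH.det_eq_prod_eigenvalues
  have hRiRdet : Ri.det * R.det = 1 := by rw [← det_mul, hRiR, det_one]
  have hdetVc : Vc.det = R.det * R.det := by rw [← det_mul, hRsq]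
  have hdetSm : S.det = Complex.I ^ (m + m) * (Ri.det * Oc.det * Ri.det) := by
    rw [hSdef, det_smul, hcard, det_mul, det_mul]
  have hOcdet2 : Oc.det * Oc.det = 1 := by
    rw [← det_mul, hOcsq, show (-1 : Matrix (Fin m ⊕ Fin m) (Fin m ⊕ Fin m) ℂ) = (-1 : ℂ) • 1
      from by simp, det_smul, hcard, det_one, mul_one]
    exact Even.neg_one_pow ⟨m, rfl⟩
  have hmaster : S.det * S.det * (Vc.det * Vc.det) = 1 := by
    rw [hdetSm, hdetVc]
    have e : Complex.I ^ (m + m) * (Ri.det * Oc.det * Ri.det)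
        * (Complex.I ^ (m + m) * (Ri.det * Oc.det * Ri.det)) * (R.det * R.det * (R.det * R.det))
        = (Complex.I * Complex.I) ^ (m + m) * (Oc.det * Oc.det)
          * ((Ri.det * R.det) * (Ri.det * R.det) * ((Ri.det * R.det) * (Ri.det * R.det))) := by
      ring
    rw [e, hRiRdet, hOcdet2, Complex.I_mul_I]
    simp [Even.neg_one_pow (⟨m, rfl⟩ : Even (m + m))]
  have hdetVC : Vc.det = ((V.det : ℝ) : ℂ) := by
    rw [hVcdef]
    exact (RingHom.map_det Complex.ofRealHom V).symm
  have hdetVpos : 0 < V.det := by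
    rw [hdetVC] at hdVpos
    exact_mod_cast hdVpos
  have hmasterR : (∏ i, μ i) ^ 2 * V.det ^ 2 = 1 := by
    have h := hmaster
    rw [hdetS, hdetVC] at h
    have h2 : (((∏ i, μ i) ^ 2 * V.det ^ 2 : ℝ) : ℂ) = ((1 : ℝ) : ℂ) := by
      push_cast
      linear_combination h
    exact_mod_cast h2
  -- rank identifications
  have hcard1 : A.rank = Fintype.card {i // μ i ≠ -1} := hrankA1.trans hrankdiag1
  have hcard2 : A.rank = Fintype.card {i // μ i ≠ 1} := by
    rw [hrankAB, hrankB1, hrankdiag2]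
  have hle1 : Fintype.card {i // μ i ≠ -1} ≤ m + m := by
    rw [← hcard]; exact Fintype.card_subtype_le _
  constructor
  · -- det V = 1 → rank A = m
    intro hdet1
    have hprodsq : (∏ i, μ i) ^ 2 = 1 := by
      rw [hdet1] at hmasterR; simpa using hmasterR
    have habs : ∏ i, |μ i| = 1 := by
      rw [← Finset.abs_prod]
      nlinarith [abs_nonneg (∏ i, μ i), sq_abs (∏ i, μ i)]
    have hpm : ∀ i, μ i = 1 ∨ μ i = -1 := by
      intro i
      have hai : |μ i| = 1 := by
        by_contra hne
        have hlt : |μ i| < 1 :=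
          lt_of_le_of_ne (abs_le.mpr ⟨(hbound i).1, (hbound i).2⟩) hne
        have h1 : ∏ j ∈ Finset.univ.erase i, |μ j| ≤ 1 :=
          Finset.prod_le_one (fun j _ => abs_nonneg _)
            (fun j _ => abs_le.mpr ⟨(hbound j).1, (hbound j).2⟩)
        have h2 : (0:ℝ) ≤ ∏ j ∈ Finset.univ.erase i, |μ j| :=
          Finset.prod_nonneg fun j _ => abs_nonneg _
        have h3 : ∏ j, |μ j| = |μ i| * ∏ j ∈ Finset.univ.erase i, |μ j| :=
          (Finset.mul_prod_erase _ _ (Finset.mem_univ i)).symm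
        have h4 : |μ i| * (∏ j ∈ Finset.univ.erase i, |μ j|) = 1 := by rw [← h3]; exact habs
        have h5 : |μ i| * (∏ j ∈ Finset.univ.erase i, |μ j|) ≤ |μ i| * 1 :=
          mul_le_mul_of_nonneg_left h1 (abs_nonneg _)
        rw [mul_one] at h5
        linarith
      rcases (abs_eq (by norm_num : (0:ℝ) ≤ 1)).mp hai with h | h
      · left; exact h
      · right; exact h
    have hcompl : ∀ i, (μ i ≠ -1) ↔ ¬(μ i ≠ 1) := by
      intro i
      rcases hpm i with h | h <;> simp [h] <;> norm_num
    have hc3 : Fintype.card {i // μ i ≠ -1} = Fintype.card {i // ¬(μ i ≠ 1)} :=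
      Fintype.card_congr (Equiv.subtypeEquivRight hcompl)
    have hc4 : Fintype.card {i // ¬(μ i ≠ 1)}
        = (m + m) - Fintype.card {i // μ i ≠ 1} := by
      rw [Fintype.card_subtype_compl, hcard]
    have hle2 : Fintype.card {i // μ i ≠ 1} ≤ m + m := by
      rw [← hcard]; exact Fintype.card_subtype_le _
    omega
  · -- rank A = m → det V = 1
    intro hrk
    have hk1 : Fintype.card {i // μ i ≠ -1} = m := hcard1 ▸ hrk
    have hk2 : Fintype.card {i // μ i ≠ 1} = m := hcard2 ▸ hrk
    have hf1 : (Finset.univ.filter fun i => μ i = 1).card = m := by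
      have h1 := Finset.card_filter_add_card_filter_not
        (s := (Finset.univ : Finset (Fin m ⊕ Fin m))) (p := fun i => μ i = 1)
      have h2 : Fintype.card {i // μ i ≠ 1}
          = (Finset.univ.filter fun i => ¬ (μ i = 1)).card := Fintype.card_subtype _
      rw [Finset.card_univ, hcard] at h1
      omega
    have hf2 : (Finset.univ.filter fun i => μ i = -1).card = m := by
      have h1 := Finset.card_filter_add_card_filter_not
        (s := (Finset.univ : Finset (Fin m ⊕ Fin m))) (p := fun i => μ i = -1)
      have h2 : Fintype.card {i // μ i ≠ -1}
          = (Finset.univ.filter fun i => ¬ (μ i = -1)).card := Fintype.card_subtype _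
      rw [Finset.card_univ, hcard] at h1
      omega
    have hdisj : Disjoint (Finset.univ.filter fun i => μ i = 1)
        (Finset.univ.filter fun i => μ i = -1) := by
      rw [Finset.disjoint_filter]
      intro i _ h1 h2
      rw [h1] at h2
      norm_num at h2
    have huniv : (Finset.univ.filter fun i => μ i = 1) ∪
        (Finset.univ.filter fun i => μ i = -1) = Finset.univ := by
      apply Finset.eq_univ_of_card
      rw [Finset.card_union_of_disjoint hdisj, hf1, hf2]
      exact hcard.symm
    have hpm : ∀ i, μ i = 1 ∨ μ i = -1 := by
      intro i
      have : i ∈ (Finset.univ.filter fun i => μ i = 1) ∪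
          (Finset.univ.filter fun i => μ i = -1) := by rw [huniv]; exact Finset.mem_univ i
      rcases Finset.mem_union.mp this with h | h
      · left; exact (Finset.mem_filter.mp h).2
      · right; exact (Finset.mem_filter.mp h).2
    have hprodsq : (∏ i, μ i) ^ 2 = 1 := by
      rw [← Finset.prod_pow]
      apply Finset.prod_eq_one
      intro i _
      rcases hpm i with h | h <;> rw [h] <;> norm_num
    rw [hprodsq, one_mul] at hmasterR
    nlinarith
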